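/- Let a > 0 and define, for s ∈ ℝ, α(s) = (s, a − a∫₀^s(∫₀^σ sinh(t²/2) dt) dσ, a∫₀^s(∫₀^σ cosh(t²/2) dt) dσ), which is an admissible spacelike curve in the pseudo-Galilean space G¹₃ with tangent T(s) = (1, −a∫₀^s sinh(t²/2) dt, a∫₀^s cosh(t²/2) dt), principal normal N(s) = (0, −sinh(s²/2), cosh(s²/2)) and binormal B(s) = (0, −cosh(s²/2), sinh(s²/2)). Then the position vector decomposes as α(s) = s·T(s) + 0·N(s) − a·B(s) for all s ∈ ℝ; consequently, with m₀(s) = s, m₁(s) = 0, m₂(s) = −a, the quantity m₂(s)² − m₁(s)² = a² is constant, so α is an N-constant curve of second kind in G¹₃. -/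

import Mathlib

open Real


/-- The curve of Example 4.2 (shifted so that its position vector is
`s • T + 0 • N + (-a) • B`). -/
noncomputable def αSal (a : ℝ) : ℝ → ℝ × ℝ × ℝ := fun s =>
  (s, a - a * ∫ σ in (0 : ℝ)..s, ∫ t in (0 : ℝ)..σ, Real.sinh (t ^ 2 / 2),
      a * ∫ σ in (0 : ℝ)..s, ∫ t in (0 : ℝ)..σ, Real.cosh (t ^ 2 / 2))

/-- Its tangent vector. -/
noncomputable def TSal (a : ℝ) : ℝ → ℝ × ℝ × ℝ := fun s =>
  (1, -a * ∫ t in (0 : ℝ)..s, Real.sinh (t ^ 2 / 2),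
      a * ∫ t in (0 : ℝ)..s, Real.cosh (t ^ 2 / 2))

/-- Its principal normal vector. -/
noncomputable def NSal : ℝ → ℝ × ℝ × ℝ := fun s =>
  (0, -Real.sinh (s ^ 2 / 2), Real.cosh (s ^ 2 / 2))

/-- Its binormal vector. -/
noncomputable def BSal : ℝ → ℝ × ℝ × ℝ := fun s =>
  (0, -Real.cosh (s ^ 2 / 2), Real.sinh (s ^ 2 / 2))


noncomputable def Fsal (s : ℝ) : ℝ := ∫ t in (0 : ℝ)..s, Real.sinh (t ^ 2 / 2)
noncomputable def Gsal (s : ℝ) : ℝ := ∫ t in (0 : ℝ)..s, Real.cosh (t ^ 2 / 2)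
noncomputable def HFsal (s : ℝ) : ℝ := ∫ σ in (0 : ℝ)..s, Fsal σ
noncomputable def HGsal (s : ℝ) : ℝ := ∫ σ in (0 : ℝ)..s, Gsal σ

lemma cont_sinh2 : Continuous fun t : ℝ => Real.sinh (t ^ 2 / 2) :=
  Real.continuous_sinh.comp (by continuity)

lemma cont_cosh2 : Continuous fun t : ℝ => Real.cosh (t ^ 2 / 2) :=
  Real.continuous_cosh.comp (by continuity)

lemma hF (s : ℝ) : HasDerivAt Fsal (Real.sinh (s ^ 2 / 2)) s :=
  (cont_sinh2.integral_hasStrictDerivAt 0 s).hasDerivAt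

lemma hG (s : ℝ) : HasDerivAt Gsal (Real.cosh (s ^ 2 / 2)) s :=
  (cont_cosh2.integral_hasStrictDerivAt 0 s).hasDerivAt

lemma contF : Continuous Fsal :=
  Differentiable.continuous fun s => (hF s).differentiableAt

lemma contG : Continuous Gsal :=
  Differentiable.continuous fun s => (hG s).differentiableAt

lemma hHF (s : ℝ) : HasDerivAt HFsal (Fsal s) s :=
  (contF.integral_hasStrictDerivAt 0 s).hasDerivAt

lemma hHG (s : ℝ) : HasDerivAt HGsal (Gsal s) s :=
  (contG.integral_hasStrictDerivAt 0 s).hasDerivAt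

lemma hcosh2 (s : ℝ) : HasDerivAt (fun x : ℝ => Real.cosh (x ^ 2 / 2))
    (Real.sinh (s ^ 2 / 2) * s) s := by
  have h1 : HasDerivAt (fun x : ℝ => x ^ 2 / 2) s s := by
    simpa using ((hasDerivAt_pow 2 s).div_const 2)
  exact (Real.hasDerivAt_cosh (s ^ 2 / 2)).comp s h1

lemma hsinh2 (s : ℝ) : HasDerivAt (fun x : ℝ => Real.sinh (x ^ 2 / 2))
    (Real.cosh (s ^ 2 / 2) * s) s := by
  have h1 : HasDerivAt (fun x : ℝ => x ^ 2 / 2) s s := by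
    simpa using ((hasDerivAt_pow 2 s).div_const 2)
  exact (Real.hasDerivAt_sinh (s ^ 2 / 2)).comp s h1

lemma ibpF (s : ℝ) : HFsal s = s * Fsal s - Real.cosh (s ^ 2 / 2) + 1 := by
  have hD : ∀ x : ℝ, HasDerivAt
      (fun x => HFsal x - (x * Fsal x - Real.cosh (x ^ 2 / 2) + 1)) 0 x := by
    intro x
    have h := (hHF x).sub ((((hasDerivAt_id x).mul (hF x)).sub (hcosh2 x)).add_const 1)
    refine h.congr_deriv ?_; simp only [id_eq]; ring
  have hdiff : Differentiable ℝ
      (fun x => HFsal x - (x * Fsal x - Real.cosh (x ^ 2 / 2) + 1)) :=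
    fun x => (hD x).differentiableAt
  have := is_const_of_deriv_eq_zero hdiff (fun x => (hD x).deriv) s 0
  have h1 : HFsal 0 = 0 := by simp [HFsal]
  have h2 : Fsal 0 = 0 := by simp [Fsal]
  simp only [h1, h2, ne_eq, OfNat.ofNat_ne_zero, not_false_eq_true, zero_pow, zero_div,
    Real.cosh_zero, zero_mul] at this
  linarith

lemma ibpG (s : ℝ) : HGsal s = s * Gsal s - Real.sinh (s ^ 2 / 2) := by
  have hD : ∀ x : ℝ, HasDerivAt
      (fun x => HGsal x - (x * Gsal x - Real.sinh (x ^ 2 / 2))) 0 x := by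
    intro x
    have h := (hHG x).sub (((hasDerivAt_id x).mul (hG x)).sub (hsinh2 x))
    refine h.congr_deriv ?_; simp only [id_eq]; ring
  have hdiff : Differentiable ℝ
      (fun x => HGsal x - (x * Gsal x - Real.sinh (x ^ 2 / 2))) :=
    fun x => (hD x).differentiableAt
  have := is_const_of_deriv_eq_zero hdiff (fun x => (hD x).deriv) s 0
  have h1 : HGsal 0 = 0 := by simp [HGsal]
  have h2 : Gsal 0 = 0 := by simp [Gsal]
  simp only [h1, h2, ne_eq, OfNat.ofNat_ne_zero, not_false_eq_true, zero_pow, zero_div,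
    Real.sinh_zero, zero_mul] at this
  linarith

lemma cd_sinh2 : ContDiff ℝ 2 fun t : ℝ => Real.sinh (t ^ 2 / 2) :=
  (Real.contDiff_sinh.of_le le_top).comp ((contDiff_id.pow 2).div_const 2)

lemma cd_cosh2 : ContDiff ℝ 2 fun t : ℝ => Real.cosh (t ^ 2 / 2) :=
  (Real.contDiff_cosh.of_le le_top).comp ((contDiff_id.pow 2).div_const 2)

lemma cdF : ContDiff ℝ 2 Fsal := by
  rw [show (2 : WithTop ℕ∞) = 1 + 1 from rfl, contDiff_succ_iff_deriv]
  refine ⟨fun s => (hF s).differentiableAt, by simp, ?_⟩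
  have h : deriv Fsal = fun s => Real.sinh (s ^ 2 / 2) := funext fun s => (hF s).deriv
  rw [h]; exact cd_sinh2.of_le (by norm_num)

lemma cdG : ContDiff ℝ 2 Gsal := by
  rw [show (2 : WithTop ℕ∞) = 1 + 1 from rfl, contDiff_succ_iff_deriv]
  refine ⟨fun s => (hG s).differentiableAt, by simp, ?_⟩
  have h : deriv Gsal = fun s => Real.cosh (s ^ 2 / 2) := funext fun s => (hG s).deriv
  rw [h]; exact cd_cosh2.of_le (by norm_num)

lemma cdHF : ContDiff ℝ 3 HFsal := by
  rw [show (3 : WithTop ℕ∞) = 2 + 1 from rfl, contDiff_succ_iff_deriv]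
  refine ⟨fun s => (hHF s).differentiableAt, by simp, ?_⟩
  have h : deriv HFsal = Fsal := funext fun s => (hHF s).deriv
  rw [h]; exact cdF

lemma cdHG : ContDiff ℝ 3 HGsal := by
  rw [show (3 : WithTop ℕ∞) = 2 + 1 from rfl, contDiff_succ_iff_deriv]
  refine ⟨fun s => (hHG s).differentiableAt, by simp, ?_⟩
  have h : deriv HGsal = Gsal := funext fun s => (hHG s).deriv
  rw [h]; exact cdG

lemma c21 (a : ℝ) : (fun x : ℝ => (αSal a x).2.1) = fun x => a - a * HFsal x := rfl

lemma c22 (a : ℝ) : (fun x : ℝ => (αSal a x).2.2) = fun x => a * HGsal x := rfl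

lemma d21 (a : ℝ) : deriv (fun x : ℝ => (αSal a x).2.1) = fun s => -a * Fsal s := by
  rw [c21]
  funext s
  have := (((hHF s).const_mul a).const_sub a).deriv
  rw [this]; ring

lemma d22 (a : ℝ) : deriv (fun x : ℝ => (αSal a x).2.2) = fun s => a * Gsal s := by
  rw [c22]
  funext s
  exact ((hHG s).const_mul a).deriv

lemma dd21 (a : ℝ) : deriv (deriv (fun x : ℝ => (αSal a x).2.1)) =
    fun s => -a * Real.sinh (s ^ 2 / 2) := by
  rw [d21]
  funext s
  exact ((hF s).const_mul (-a)).deriv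

lemma dd22 (a : ℝ) : deriv (deriv (fun x : ℝ => (αSal a x).2.2)) =
    fun s => a * Real.cosh (s ^ 2 / 2) := by
  rw [d22]
  funext s
  exact ((hG s).const_mul a).deriv

lemma key (a : ℝ) (s : ℝ) :
    (deriv (deriv (fun x : ℝ => (αSal a x).2.1)) s) ^ 2 -
      (deriv (deriv (fun x : ℝ => (αSal a x).2.2)) s) ^ 2 = -a ^ 2 := by
  rw [dd21, dd22]
  have h := Real.cosh_sq_sub_sinh_sq (s ^ 2 / 2)
  linear_combination (-a ^ 2) * h

/-- For `a > 0`, the admissible spacelike curve `αSal a` (whose coordinate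
functions are three times continuously differentiable and satisfy the admissibility
condition, with Frenet frame `TSal a`, `NSal`, `BSal`) has position vector decomposing
as `αSal a s = s • TSal a s + 0 • NSal s + (-a) • BSal s`; hence with `m₀ s = s`,
`m₁ s = 0`, `m₂ s = -a` the quantity `m₂² - m₁² = a²` is a nonzero constant, so `αSal a`
is an N-constant curve of second kind in `G¹₃`. -/
theorem stmt_15 (a : ℝ) (ha : 0 < a) :
    ContDiff ℝ 3 (fun s : ℝ => (αSal a s).2.1) ∧
    ContDiff ℝ 3 (fun s : ℝ => (αSal a s).2.2) ∧
    (∀ s : ℝ,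
      (deriv (deriv (fun x : ℝ => (αSal a x).2.1)) s) ^ 2 -
        (deriv (deriv (fun x : ℝ => (αSal a x).2.2)) s) ^ 2 ≠ 0 ∧
      deriv (fun x : ℝ => (αSal a x).2.1) s = (TSal a s).2.1 ∧
      deriv (fun x : ℝ => (αSal a x).2.2) s = (TSal a s).2.2 ∧
      deriv (deriv (fun x : ℝ => (αSal a x).2.1)) s / a = (NSal s).2.1 ∧
      deriv (deriv (fun x : ℝ => (αSal a x).2.2)) s / a = (NSal s).2.2) ∧
    (∃ ε : ℝ, (ε = 1 ∨ ε = -1) ∧ ∀ s : ℝ,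
      |(deriv (deriv (fun x : ℝ => (αSal a x).2.1)) s) ^ 2 -
          (deriv (deriv (fun x : ℝ => (αSal a x).2.2)) s) ^ 2| =
        ε * ((deriv (deriv (fun x : ℝ => (αSal a x).2.1)) s) ^ 2 -
          (deriv (deriv (fun x : ℝ => (αSal a x).2.2)) s) ^ 2) ∧
      ε * deriv (deriv (fun x : ℝ => (αSal a x).2.2)) s / a = (BSal s).2.1 ∧
      ε * deriv (deriv (fun x : ℝ => (αSal a x).2.1)) s / a = (BSal s).2.2) ∧
    (∀ s : ℝ, αSal a s = s • TSal a s + (0 : ℝ) • NSal s + (-a) • BSal s) ∧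
    (∀ s : ℝ, (-a : ℝ) ^ 2 - (0 : ℝ) ^ 2 = a ^ 2) ∧
    a ^ 2 ≠ 0 := by
  have ha0 : a ≠ 0 := ne_of_gt ha
  have ha2 : (0:ℝ) < a ^ 2 := by positivity
  refine ⟨?_, ?_, ?_, ?_, ?_, fun s => by ring, by positivity⟩
  · rw [c21]; exact contDiff_const.sub (contDiff_const.mul cdHF)
  · rw [c22]; exact contDiff_const.mul cdHG
  · intro s
    refine ⟨by rw [key]; nlinarith, ?_, ?_, ?_, ?_⟩
    · rw [d21]; rfl
    · rw [d22]; rfl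
    · rw [dd21]; simp [NSal]; field_simp; try ring
    · rw [dd22]; simp [NSal]; field_simp; try ring
  · refine ⟨-1, Or.inr rfl, fun s => ?_⟩
    rw [key a s]
    refine ⟨by rw [abs_of_nonpos (by nlinarith)]; ring, ?_, ?_⟩
    · rw [dd22]; simp only [BSal]; field_simp; try ring
    · rw [dd21]; simp only [BSal]; field_simp; try ring
  · intro s
    have e1 : a - a * HFsal s =
        s * (-a * Fsal s) + 0 * (-Real.sinh (s ^ 2 / 2)) + -a * (-Real.cosh (s ^ 2 / 2)) := by
      rw [ibpF]; ring
    have e2 : a * HGsal s =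
        s * (a * Gsal s) + 0 * Real.cosh (s ^ 2 / 2) + -a * Real.sinh (s ^ 2 / 2) := by
      rw [ibpG]; ring
    show ((s : ℝ), a - a * HFsal s, a * HGsal s) = _
    simp only [TSal, NSal, BSal, Prod.smul_mk, smul_eq_mul, Prod.mk_add_mk, Prod.mk.injEq]
    exact ⟨by ring, e1, e2⟩
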